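/- For any θ > 0 and any competitive nondegenerate TLN W and any σ ⊆ [n], whether σ is the support of a fixed point of (W,θ) does not depend on the choice of θ > 0: if σ supports a fixed point for some θ > 0, it supports a fixed point for all θ > 0. -/

import Mathlib

open Finset

/-- `σ` is the support of a fixed point of the TLN obtained by restricting `W` to the
subnetwork on `τ` (take `τ = univ` for the full network). -/
def fpSupport {n : ℕ} (W : Matrix (Fin n) (Fin n) ℝ) (θ : ℝ)
    (τ σ : Finset (Fin n)) : Prop :=
  σ ⊆ τ ∧ ∃ x : Fin n → ℝ,
    (∀ i, i ∉ τ → x i = 0) ∧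
    (∀ i ∈ τ, x i = max 0 ((∑ j ∈ τ, W i j * x j) + θ)) ∧
    (∀ i, 0 < x i ↔ i ∈ σ)

theorem stmt_2 {n : ℕ} (W : Matrix (Fin n) (Fin n) ℝ)
    (hdiag : ∀ i, W i i = 0) (hoff : ∀ i j, i ≠ j → W i j < 0)
    (hdet : ∀ τ : Finset (Fin n),
      ((1 : Matrix τ τ ℝ) - W.submatrix (Subtype.val) (Subtype.val)).det ≠ 0)
    (hcramer : ∀ (θ : ℝ), 0 < θ → ∀ τ : Finset (Fin n), ∀ i : τ,
      (((1 : Matrix τ τ ℝ) - W.submatrix (Subtype.val) (Subtype.val)).updateCol i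
        (fun _ => θ)).det ≠ 0)
    (σ : Finset (Fin n))
    (h : ∃ θ : ℝ, 0 < θ ∧ fpSupport W θ Finset.univ σ) :
    ∀ θ : ℝ, 0 < θ → fpSupport W θ Finset.univ σ := by
  obtain ⟨θ₀, hθ₀, hsub, x, hx0, hfix, hsupp⟩ := h
  intro θ hθ
  have hc : 0 < θ / θ₀ := div_pos hθ hθ₀
  refine ⟨hsub, fun i => (θ / θ₀) * x i, fun i hi => by simp [hx0 i hi], fun i _ => ?_, fun i => ?_⟩
  · have := hfix i (mem_univ i)
    calc θ / θ₀ * x i = θ / θ₀ * max 0 ((∑ j ∈ univ, W i j * x j) + θ₀) := by rw [← this]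
    _ = max 0 ((θ / θ₀) * ((∑ j ∈ univ, W i j * x j) + θ₀)) := by
        rw [mul_max_of_nonneg _ _ hc.le, mul_zero]
    _ = max 0 ((∑ j ∈ univ, W i j * (θ / θ₀ * x j)) + θ) := by
        congr 1
        rw [mul_add, Finset.mul_sum]
        congr 1
        · exact Finset.sum_congr rfl (fun j _ => by ring)
        · field_simp
  · rw [← hsupp i]
    constructor
    · intro hpos
      simpa using (mul_pos_iff_of_pos_left hc).mp hpos
    · intro hpos; exact mul_pos hc hpos
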